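/- arXiv:2107.14488 — 2 statements merged into one kernel-verified Lean document; each statement's English description precedes it below -/
import Mathlib

section
/- Define I : ℝ → ℂ by I(α) = (1/√(2π)) · ∫_ℝ exp(−x²/2 + i·α·x³) dx. Then I is twice differentiable on ℝ and satisfies, for all α ∈ ℝ, the differential equation 27·α³·I''(α) + (1 + 81·α²)·I'(α) + 15·α·I(α) = 0. -/
open MeasureTheory Real Complex

/-- The cubic-model integral `I(α) = (1/√(2π)) ∫ exp(-x²/2 + iαx³) dx`. -/
noncomputable def cubicI (α : ℝ) : ℂ :=
  (1 / Real.sqrt (2 * π) : ℝ) *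
    ∫ x : ℝ, Complex.exp (-(x : ℂ) ^ 2 / 2 + Complex.I * α * (x : ℂ) ^ 3)

noncomputable def gg (α x : ℝ) : ℂ :=
  Complex.exp (-(x : ℂ) ^ 2 / 2 + Complex.I * α * (x : ℂ) ^ 3)

lemma norm_gg (α x : ℝ) : ‖gg α x‖ = Real.exp (-x ^ 2 / 2) := by
  have h : (-(x : ℂ) ^ 2 / 2 + Complex.I * α * (x : ℂ) ^ 3)
      = Complex.ofReal (-x ^ 2 / 2) + Complex.ofReal (α * x ^ 3) * Complex.I := by
    push_cast; ring
  rw [gg, h, Complex.norm_exp]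
  rw [Complex.add_re, Complex.mul_I_re, Complex.ofReal_im, Complex.ofReal_re]; ring_nf

lemma key_bound (n : ℕ) (x : ℝ) :
    |x| ^ n * Real.exp (-x ^ 2 / 2)
      ≤ (4 ^ n * n.factorial + 1) * Real.exp (-(1/4) * x ^ 2) := by
  have h0 := Real.pow_div_factorial_le_exp (x := x ^ 2 / 4) (by positivity) n
  have h2 : x ^ (2 * n) ≤ 4 ^ n * n.factorial * Real.exp (x ^ 2 / 4) := by
    have : (x ^ 2 / 4) ^ n ≤ n.factorial * Real.exp (x ^ 2 / 4) := by
      rw [div_le_iff₀ (by positivity : (0:ℝ) < n.factorial)] at h0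
      linarith [h0]
    have h4 : (x ^ 2 / 4) ^ n = x ^ (2 * n) / 4 ^ n := by
      rw [div_pow, pow_mul]
    rw [h4, div_le_iff₀ (by positivity : (0:ℝ) < 4 ^ n)] at this
    calc x ^ (2*n) ≤ (↑n.factorial * Real.exp (x ^ 2 / 4)) * 4 ^ n := this
      _ = 4 ^ n * n.factorial * Real.exp (x ^ 2 / 4) := by ring
  have h1 : |x| ^ n ≤ x ^ (2 * n) + 1 := by
    have hx : x ^ (2 * n) = |x| ^ (2 * n) := by
      rw [← _root_.abs_pow]; exact (_root_.abs_of_nonneg (by rw [pow_mul]; positivity)).symm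
    rw [hx]
    rcases le_total |x| 1 with h | h
    · have := pow_le_one₀ (abs_nonneg x) h (n := n)
      nlinarith [pow_nonneg (abs_nonneg x) (2 * n)]
    · have := pow_le_pow_right₀ h (Nat.le_mul_of_pos_left n (by norm_num : 0 < 2))
      linarith
  have hexp : Real.exp (-(1/4) * x ^ 2) = Real.exp (x ^ 2 / 4) * Real.exp (-x ^ 2 / 2) := by
    rw [← Real.exp_add]; ring_nf
  rw [hexp, ← mul_assoc]
  apply mul_le_mul_of_nonneg_right _ (Real.exp_pos _).le
  have he1 : (1:ℝ) ≤ Real.exp (x ^ 2 / 4) := Real.one_le_exp (by positivity)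
  calc |x| ^ n ≤ x ^ (2*n) + 1 := h1
    _ ≤ 4 ^ n * n.factorial * Real.exp (x ^ 2 / 4) + 1 * Real.exp (x ^ 2 / 4) := by
        apply add_le_add h2; linarith
    _ = (4 ^ n * n.factorial + 1) * Real.exp (x ^ 2 / 4) := by ring

lemma cont_mono (n : ℕ) (α : ℝ) :
    Continuous fun x : ℝ => (Complex.I * (x : ℂ) ^ 3) ^ n * gg α x := by
  unfold gg; fun_prop

lemma norm_mono (n : ℕ) (α x : ℝ) :
    ‖(Complex.I * (x : ℂ) ^ 3) ^ n * gg α x‖ = |x| ^ (3 * n) * Real.exp (-x ^ 2 / 2) := by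
  rw [norm_mul, norm_pow, norm_mul, Complex.norm_I, one_mul, norm_pow,
    Complex.norm_real, Real.norm_eq_abs, norm_gg, ← pow_mul]

lemma integrable_abspow (k : ℕ) :
    Integrable (fun x : ℝ => |x| ^ k * Real.exp (-x ^ 2 / 2)) := by
  apply Integrable.mono'
    ((integrable_exp_neg_mul_sq (by norm_num : (0:ℝ) < 1/4)).const_mul
      ((4:ℝ) ^ k * k.factorial + 1))
  · exact (by fun_prop : Continuous fun x : ℝ => |x|^k * Real.exp (-x^2/2)).aestronglyMeasurable
  · filter_upwards with x
    rw [Real.norm_eq_abs, _root_.abs_of_nonneg (by positivity)]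
    exact key_bound k x

lemma integrable_mono (n : ℕ) (α : ℝ) :
    Integrable fun x : ℝ => (Complex.I * (x:ℂ)^3)^n * gg α x := by
  apply Integrable.mono' (integrable_abspow (3*n))
  · exact (cont_mono n α).aestronglyMeasurable
  · filter_upwards with x
    rw [norm_mono]

lemma hasDerivAt_gg (α x : ℝ) :
    HasDerivAt (fun β : ℝ => gg β x) (Complex.I * (x:ℂ)^3 * gg α x) α := by
  have h1 : HasDerivAt (fun β : ℝ => (β : ℂ)) 1 α := by
    exact Complex.ofRealCLM.hasDerivAt
  have h2 : HasDerivAt (fun β : ℝ => -(x:ℂ)^2/2 + Complex.I * (β:ℂ) * (x:ℂ)^3)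
      (Complex.I * (x:ℂ)^3) α := by
    have := ((h1.const_mul Complex.I).mul_const ((x:ℂ)^3)).const_add (-(x:ℂ)^2/2)
    convert this using 1; rfl; ring
  have h3 := h2.cexp
  convert h3 using 1; rfl
  unfold gg; ring

lemma hasDerivAt_int (n : ℕ) (α : ℝ) :
    HasDerivAt (fun β : ℝ => ∫ x : ℝ, (Complex.I * (x:ℂ)^3)^n * gg β x)
      (∫ x : ℝ, (Complex.I * (x:ℂ)^3)^(n+1) * gg α x) α := by
  refine (hasDerivAt_integral_of_dominated_loc_of_deriv_le (s := Metric.ball α 1)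
    (bound := fun x => ((4:ℝ)^(3*(n+1)) * (3*(n+1)).factorial + 1) * Real.exp (-(1/4) * x^2))
    (F' := fun β x => (Complex.I * (x:ℂ)^3)^(n+1) * gg β x)
    (Metric.ball_mem_nhds α one_pos) ?_ ?_ ?_ ?_ ?_ ?_).2
  · exact Filter.Eventually.of_forall fun β => (cont_mono n β).aestronglyMeasurable
  · exact integrable_mono n α
  · exact (cont_mono (n+1) α).aestronglyMeasurable
  · filter_upwards with x
    intro β _
    rw [norm_mono]
    exact key_bound _ x
  · exact (integrable_exp_neg_mul_sq (by norm_num : (0:ℝ) < 1/4)).const_mul _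
  · filter_upwards with x
    intro β _
    have := (hasDerivAt_gg β x).const_mul ((Complex.I * (x:ℂ)^3)^n)
    refine this.congr_deriv ?_
    ring

lemma gg_hasDerivAt_x (α x : ℝ) :
    HasDerivAt (fun y : ℝ => gg α y) ((-(x:ℂ) + 3*Complex.I*α*(x:ℂ)^2) * gg α x) x := by
  have h2c : HasDerivAt (fun z : ℂ => -z^2/2 + Complex.I * (α:ℂ) * z^3)
      (-(x:ℂ) + 3*Complex.I*α*(x:ℂ)^2) (x:ℂ) := by
    have := ((hasDerivAt_pow 2 (x:ℂ)).neg.div_const 2).add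
      ((hasDerivAt_pow 3 (x:ℂ)).const_mul (Complex.I * (α:ℂ)))
    refine this.congr_deriv ?_
    push_cast; ring
  have h2 := h2c.comp_ofReal
  have h3 := h2.cexp
  convert h3 using 1; rfl
  unfold gg; ring

lemma ibp (α : ℝ) :
    ∫ x : ℝ, (27*(α:ℂ)^3*(Complex.I*(x:ℂ)^3)^2 + (1+81*(α:ℂ)^2)*(Complex.I*(x:ℂ)^3)
      + 15*(α:ℂ)) * gg α x = 0 := by
  set F : ℝ → ℂ := fun x => (9*Complex.I*(α:ℂ)^2*(x:ℂ)^4 + 3*(α:ℂ)*(x:ℂ)^3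
      - Complex.I*(x:ℂ)^2 + 15*(α:ℂ)*(x:ℂ) - 2*Complex.I) * gg α x with hF
  have hderiv : ∀ x : ℝ, HasDerivAt F
      ((27*(α:ℂ)^3*(Complex.I*(x:ℂ)^3)^2 + (1+81*(α:ℂ)^2)*(Complex.I*(x:ℂ)^3)
        + 15*(α:ℂ)) * gg α x) x := by
    intro x
    have hPc : HasDerivAt (fun z : ℂ => 9*Complex.I*(α:ℂ)^2*z^4 + 3*(α:ℂ)*z^3
        - Complex.I*z^2 + 15*(α:ℂ)*z - 2*Complex.I)
        (36*Complex.I*(α:ℂ)^2*(x:ℂ)^3 + 9*(α:ℂ)*(x:ℂ)^2 - 2*Complex.I*(x:ℂ) + 15*(α:ℂ)) (x:ℂ) := by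
      have := ((((((hasDerivAt_pow 4 (x:ℂ)).const_mul (9*Complex.I*(α:ℂ)^2)).add
        ((hasDerivAt_pow 3 (x:ℂ)).const_mul (3*(α:ℂ)))).sub
        ((hasDerivAt_pow 2 (x:ℂ)).const_mul Complex.I)).add
        ((hasDerivAt_id (x:ℂ)).const_mul (15*(α:ℂ)))).sub_const (2*Complex.I))
      refine this.congr_deriv ?_
      push_cast; ring
    have hP := hPc.comp_ofReal
    have h4 := hP.mul (gg_hasDerivAt_x α x)
    refine h4.congr_deriv (Eq.symm ?_)
    linear_combination (3*(α:ℂ)*(x:ℂ)^4 + 6*(α:ℂ)*(x:ℂ)^2) * gg α x * Complex.I_sq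
  apply integral_eq_zero_of_hasDerivAt_of_integrable hderiv
  · have hsum := (((integrable_mono 2 α).const_mul (27*(α:ℂ)^3)).add
      ((integrable_mono 1 α).const_mul (1+81*(α:ℂ)^2))).add
      ((integrable_mono 0 α).const_mul (15*(α:ℂ)))
    refine hsum.congr (Filter.Eventually.of_forall fun x => ?_)
    simp only [Pi.add_apply, pow_zero, mul_one]
    ring
  · apply Integrable.mono' (g := fun x : ℝ =>
      9 * |α| ^ 2 * (|x| ^ 4 * Real.exp (-x^2/2)) + 3 * |α| * (|x| ^ 3 * Real.exp (-x^2/2))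
      + (|x| ^ 2 * Real.exp (-x^2/2)) + 15 * |α| * (|x| ^ 1 * Real.exp (-x^2/2))
      + 2 * (|x| ^ 0 * Real.exp (-x^2/2)))
    · exact ((((((integrable_abspow 4).const_mul _).add
        ((integrable_abspow 3).const_mul _)).add (integrable_abspow 2)).add
        ((integrable_abspow 1).const_mul _)).add ((integrable_abspow 0).const_mul _))
    · apply Continuous.aestronglyMeasurable
      rw [hF]; unfold gg; fun_prop
    · filter_upwards with x
      rw [hF]
      have hgn : ‖gg α x‖ = Real.exp (-x^2/2) := norm_gg α x
      rw [norm_mul, hgn]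
      have hP : ‖(9*Complex.I*(α:ℂ)^2*(x:ℂ)^4 + 3*(α:ℂ)*(x:ℂ)^3
          - Complex.I*(x:ℂ)^2 + 15*(α:ℂ)*(x:ℂ) - 2*Complex.I)‖
          ≤ 9 * |α| ^ 2 * |x| ^ 4 + 3 * |α| * |x| ^ 3 + |x| ^ 2 + 15 * |α| * |x| + 2 := by
        have n1 : ‖9*Complex.I*(α:ℂ)^2*(x:ℂ)^4‖ = 9 * |α| ^ 2 * |x| ^ 4 := by
          simp [norm_mul, norm_pow, Complex.norm_real]
        have n2 : ‖3*(α:ℂ)*(x:ℂ)^3‖ = 3 * |α| * |x| ^ 3 := by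
          simp [norm_mul, norm_pow, Complex.norm_real]
        have n3 : ‖Complex.I*(x:ℂ)^2‖ = |x| ^ 2 := by
          simp [norm_mul, norm_pow, Complex.norm_real]
        have n4 : ‖15*(α:ℂ)*(x:ℂ)‖ = 15 * |α| * |x| := by
          simp [norm_mul, Complex.norm_real]
        have n5 : ‖(2*Complex.I : ℂ)‖ = 2 := by simp
        calc ‖_ + _ - _ + _ - _‖
            ≤ ‖9*Complex.I*(α:ℂ)^2*(x:ℂ)^4 + 3*(α:ℂ)*(x:ℂ)^3 - Complex.I*(x:ℂ)^2
              + 15*(α:ℂ)*(x:ℂ)‖ + ‖(2*Complex.I : ℂ)‖ := norm_sub_le _ _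
          _ ≤ (‖9*Complex.I*(α:ℂ)^2*(x:ℂ)^4 + 3*(α:ℂ)*(x:ℂ)^3 - Complex.I*(x:ℂ)^2‖
              + ‖15*(α:ℂ)*(x:ℂ)‖) + ‖(2*Complex.I : ℂ)‖ := by
            gcongr; exact norm_add_le _ _
          _ ≤ ((‖9*Complex.I*(α:ℂ)^2*(x:ℂ)^4 + 3*(α:ℂ)*(x:ℂ)^3‖ + ‖Complex.I*(x:ℂ)^2‖)
              + ‖15*(α:ℂ)*(x:ℂ)‖) + ‖(2*Complex.I : ℂ)‖ := by
            gcongr; exact norm_sub_le _ _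
          _ ≤ (((‖9*Complex.I*(α:ℂ)^2*(x:ℂ)^4‖ + ‖3*(α:ℂ)*(x:ℂ)^3‖) + ‖Complex.I*(x:ℂ)^2‖)
              + ‖15*(α:ℂ)*(x:ℂ)‖) + ‖(2*Complex.I : ℂ)‖ := by
            gcongr; exact norm_add_le _ _
          _ = 9 * |α| ^ 2 * |x| ^ 4 + 3 * |α| * |x| ^ 3 + |x| ^ 2 + 15 * |α| * |x| + 2 := by
            rw [n1, n2, n3, n4, n5]
      calc ‖_‖ * Real.exp (-x^2/2)
          ≤ (9 * |α| ^ 2 * |x| ^ 4 + 3 * |α| * |x| ^ 3 + |x| ^ 2 + 15 * |α| * |x| + 2) * Real.exp (-x^2/2) :=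
            mul_le_mul_of_nonneg_right hP (Real.exp_pos _).le
        _ = _ := by ring

/-- The cubic-model integral is twice differentiable and satisfies the ODE
`27 α³ I'' + (1 + 81 α²) I' + 15 α I = 0`. -/
theorem cubicI_ode :
    (∀ α : ℝ, DifferentiableAt ℝ cubicI α) ∧
    (∀ α : ℝ, DifferentiableAt ℝ (deriv cubicI) α) ∧
    ∀ α : ℝ, 27 * (α : ℂ) ^ 3 * deriv (deriv cubicI) α +
        (1 + 81 * (α : ℂ) ^ 2) * deriv cubicI α + 15 * (α : ℂ) * cubicI α = 0 := by
  set c : ℂ := ((1 / Real.sqrt (2 * π) : ℝ) : ℂ) with hc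
  have hcubic : cubicI = fun β => c * ∫ x : ℝ, (Complex.I*(x:ℂ)^3)^0 * gg β x := by
    funext β
    simp only [cubicI, pow_zero, one_mul, gg, hc]
  have hJ : ∀ (n : ℕ) (α : ℝ), HasDerivAt
      (fun β : ℝ => c * ∫ x : ℝ, (Complex.I*(x:ℂ)^3)^n * gg β x)
      (c * ∫ x : ℝ, (Complex.I*(x:ℂ)^3)^(n+1) * gg α x) α :=
    fun n α => (hasDerivAt_int n α).const_mul c
  have h0 : ∀ α : ℝ, HasDerivAt cubicI
      (c * ∫ x : ℝ, (Complex.I*(x:ℂ)^3)^1 * gg α x) α := by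
    intro α; rw [hcubic]; simpa using hJ 0 α
  have hderiv1 : deriv cubicI = fun α : ℝ => c * ∫ x : ℝ, (Complex.I*(x:ℂ)^3)^1 * gg α x :=
    funext fun α => (h0 α).deriv
  have h1 : ∀ α : ℝ, HasDerivAt (deriv cubicI)
      (c * ∫ x : ℝ, (Complex.I*(x:ℂ)^3)^2 * gg α x) α := by
    intro α; rw [hderiv1]; simpa using hJ 1 α
  refine ⟨fun α => (h0 α).differentiableAt, fun α => (h1 α).differentiableAt, ?_⟩
  intro α
  have e2 : deriv (deriv cubicI) α = c * ∫ x : ℝ, (Complex.I*(x:ℂ)^3)^2 * gg α x := (h1 α).deriv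
  rw [e2, hderiv1, hcubic]
  simp only []
  have i2 := (integrable_mono 2 α).const_mul (27*(α:ℂ)^3)
  have i1 := (integrable_mono 1 α).const_mul (1+81*(α:ℂ)^2)
  have i0 := (integrable_mono 0 α).const_mul (15*(α:ℂ))
  have comb : (27*(α:ℂ)^3) * (∫ x : ℝ, (Complex.I*(x:ℂ)^3)^2 * gg α x)
      + (1+81*(α:ℂ)^2) * (∫ x : ℝ, (Complex.I*(x:ℂ)^3)^1 * gg α x)
      + (15*(α:ℂ)) * (∫ x : ℝ, (Complex.I*(x:ℂ)^3)^0 * gg α x) = 0 := by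
    have i21 : Integrable (fun x : ℝ => 27*(α:ℂ)^3 * ((Complex.I*(x:ℂ)^3)^2 * gg α x)
        + (1+81*(α:ℂ)^2) * ((Complex.I*(x:ℂ)^3)^1 * gg α x)) volume := i2.add i1
    rw [← integral_const_mul, ← integral_const_mul, ← integral_const_mul,
      ← integral_add i2 i1, ← integral_add i21 i0, ← ibp α]
    congr 1
    funext x
    ring
  linear_combination c * comb
end

section
/- Define b : ℕ → ℂ on odd indices by b_1 = −3i and, for all k ≥ 0, b_{2k+3} = −6i · Σ_{n=0}^{k} (3(k−n)+1) · b_{2n+1} · b_{2k−2n+1}. Let f ∈ ℂ[[X]] be the formal power series f = Σ_{k ≥ 0} b_{2k+1} · X^{2k+1}. Then f satisfies the formal differential equation 9·i·X²·f·f' − 3·i·X·f² + 3·i·X + f = 0 in ℂ[[X]], where f' denotes the formal derivative of f. -/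
open PowerSeries

/-- The odd coefficients `b_{2k+1}` of the stationary source `β̃(α)`:
`bOdd k = b_{2k+1}`, with `b₁ = -3i` and
`b_{2k+3} = -6i ∑_{n=0}^{k} (3(k-n)+1) b_{2n+1} b_{2k-2n+1}`.
(For `n` in the summation range `n ≤ k`, so `min n k = n`.) -/
noncomputable def bOdd : ℕ → ℂ
  | 0 => -3 * Complex.I
  | k + 1 => -6 * Complex.I *
      ∑ n ∈ Finset.range (k + 1),
        ((3 * (k - n) + 1 : ℕ) : ℂ) * bOdd (min n k) * bOdd (k - n)
  termination_by k => k
  decreasing_by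
  · exact Nat.lt_succ_of_le (Nat.min_le_right n k)
  · exact Nat.lt_succ_of_le (Nat.sub_le k n)

private lemma sum_pair (g : ℕ → ℂ) (k : ℕ) :
    ∑ i ∈ Finset.range (2*k+2), g i = ∑ n ∈ Finset.range (k+1), (g (2*n) + g (2*n+1)) := by
  induction k with
  | zero => simp [Finset.sum_range_succ]
  | succ k ih =>
      have e1 : 2*(k+1)+2 = (2*k+2)+1+1 := by ring
      rw [e1, Finset.sum_range_succ, Finset.sum_range_succ, ih, Finset.sum_range_succ _ (k+1)]
      rw [show 2*k+2+1 = 2*k+3 by omega, add_assoc, show 2*(k+1) = 2*k+2 by omega,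
        show 2*k+2+1 = 2*k+3 by omega]

private lemma bOdd_succ (k : ℕ) : bOdd (k+1) =
    -6 * Complex.I * ∑ n ∈ Finset.range (k + 1),
        ((3 * (k - n) + 1 : ℕ) : ℂ) * bOdd n * bOdd (k - n) := by
  rw [bOdd]
  congr 1
  refine Finset.sum_congr rfl fun n hn => ?_
  rw [min_eq_left (Nat.le_of_lt_succ (Finset.mem_range.mp hn))]

/-- The formal power series `f = ∑_{k≥0} b_{2k+1} X^{2k+1}` of the stationary source
`β̃(α)` satisfies the formal differential equation
`9iX² f f' - 3iX f² + 3iX + f = 0`. -/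
theorem betaTilde_formal_ode
    (f : PowerSeries ℂ)
    (hf : f = PowerSeries.mk fun m => if Odd m then bOdd (m / 2) else 0) :
    PowerSeries.C (9 * Complex.I) * PowerSeries.X ^ 2 * f * (d⁄dX ℂ f) -
      PowerSeries.C (3 * Complex.I) * PowerSeries.X * f ^ 2 +
      PowerSeries.C (3 * Complex.I) * PowerSeries.X + f = 0 := by
  set a : ℕ → ℂ := fun m => if Odd m then bOdd (m / 2) else 0 with ha
  rw [show PowerSeries.C (9 * Complex.I) * PowerSeries.X ^ 2 * f * (d⁄dX ℂ f)
      = PowerSeries.C (9 * Complex.I) * (PowerSeries.X ^ 2 * (f * d⁄dX ℂ f)) from by ring,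
    show PowerSeries.C (3 * Complex.I) * PowerSeries.X * f ^ 2
      = PowerSeries.C (3 * Complex.I) * (PowerSeries.X ^ 1 * (f * f)) from by ring,
    show PowerSeries.C (3 * Complex.I) * PowerSeries.X
      = PowerSeries.C (3 * Complex.I) * PowerSeries.X ^ 1 from by ring]
  ext m
  simp only [map_add, map_sub, coeff_C_mul, coeff_X_pow_mul', coeff_X_pow, map_zero]
  simp only [coeff_mul, coeff_derivative, hf, coeff_mk]
  have haz : ∀ j, j % 2 = 0 → a j = 0 := fun j hj => if_neg (by simp [Nat.odd_iff, hj])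
  have hab : ∀ j, a (2*j+1) = bOdd j := by
    intro j
    rw [ha]
    simp only []
    rw [if_pos (Nat.odd_iff.mpr (by omega))]
    congr 1
    omega
  rcases m with _ | _ | m
  · -- m = 0
    norm_num [haz 0 rfl]
  · -- m = 1
    norm_num [Finset.Nat.antidiagonal_zero, haz 0 rfl, hab 0, bOdd]
  · -- m + 2
    rw [if_pos (by omega), if_pos (by omega), if_neg (by omega)]
    have e1 : m + 1 + 1 - 2 = m := by omega
    have e2 : m + 1 + 1 - 1 = m + 1 := by omega
    rw [e1, e2, Finset.Nat.sum_antidiagonal_eq_sum_range_succ_mk,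
      Finset.Nat.sum_antidiagonal_eq_sum_range_succ_mk]
    rcases Nat.even_or_odd m with hm | hm
    · -- m even: every term vanishes
      rw [Finset.sum_eq_zero, Finset.sum_eq_zero, haz (m+1+1) (by have := Nat.even_iff.mp hm; omega)]
      · ring
      · intro i hi
        have hi' : i < m + 2 := Finset.mem_range.mp hi
        rcases Nat.even_or_odd i with h | h
        · rw [haz i (Nat.even_iff.mp h)]; ring
        · rw [haz (m+1-i) (by have := Nat.even_iff.mp hm; have := Nat.odd_iff.mp h; omega)]
          ring
      · intro i hi
        have hi' : i < m + 1 := Finset.mem_range.mp hi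
        rcases Nat.even_or_odd i with h | h
        · rw [haz i (Nat.even_iff.mp h)]; ring
        · rw [haz (m-i+1) (by have := Nat.even_iff.mp hm; have := Nat.odd_iff.mp h; omega)]
          ring
    · obtain ⟨k, hk⟩ := hm
      subst hk
      have hS1 : ∑ i ∈ Finset.range (2*k+1+1), a i * (a (2*k+1-i+1) * ((2*k+1-i : ℕ) + 1 : ℂ))
          = ∑ n ∈ Finset.range (k+1),
              bOdd n * (bOdd (k-n) * (2*((k:ℂ)-(n:ℂ))+1)) := by
        rw [show 2*k+1+1 = 2*k+2 by omega, sum_pair]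
        refine Finset.sum_congr rfl fun n hn => ?_
        have hn' : n ≤ k := Nat.le_of_lt_succ (Finset.mem_range.mp hn)
        have e : 2*k+1-(2*n+1)+1 = 2*(k-n)+1 := by omega
        have e' : 2*k+1-(2*n+1) = 2*(k-n) := by omega
        rw [haz (2*n) (by omega), hab n, e, e', hab (k-n)]
        have : ((2*(k-n) : ℕ) : ℂ) = 2*((k:ℂ)-(n:ℂ)) := by
          push_cast [Nat.cast_sub hn']
          ring
        rw [this]
        ring
      have hS2 : ∑ i ∈ Finset.range (2*k+1+2), a i * a (2*k+1+1-i)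
          = ∑ n ∈ Finset.range (k+1), bOdd n * bOdd (k-n) := by
        rw [show 2*k+1+2 = (2*k+2)+1 by omega, Finset.sum_range_succ,
          haz (2*k+2) (by omega), sum_pair]
        rw [zero_mul, add_zero]
        refine Finset.sum_congr rfl fun n hn => ?_
        have hn' : n ≤ k := Nat.le_of_lt_succ (Finset.mem_range.mp hn)
        have e : 2*k+1+1-(2*n+1) = 2*(k-n)+1 := by omega
        rw [haz (2*n) (by omega), hab n, e, hab (k-n)]
        ring
      have hA : a (2*k+1+1+1) = bOdd (k+1) := by
        rw [show 2*k+1+1+1 = 2*(k+1)+1 by omega, hab (k+1)]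
      rw [hS1, hS2, hA, bOdd_succ k, Finset.mul_sum, Finset.mul_sum, Finset.mul_sum,
        mul_zero, add_zero, ← Finset.sum_sub_distrib, ← Finset.sum_add_distrib]
      refine Finset.sum_eq_zero fun n hn => ?_
      have hn' : n ≤ k := Nat.le_of_lt_succ (Finset.mem_range.mp hn)
      have hc : ((3*(k-n)+1 : ℕ) : ℂ) = 3*((k:ℂ)-(n:ℂ))+1 := by
        push_cast [Nat.cast_sub hn']
        ring
      rw [hc]
      ring
end
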